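/- Let G = (V, E) be a directed hypergraph, I₁ = (0 → 1), and I the hypergraph on {0, 1} with edges {0}, {1}, {0,1}. Then for every q ≥ 2 there is an inclusion of path complexes ℌ^q(𝔈(G □ I₁)) ⊆ ℌ^q(𝔈(G) × I); moreover this inclusion can be strict: there exists a directed hypergraph G for which ℌ²(𝔈(G □ I₁)) ≠ ℌ²(𝔈(G) × I). -/

import Mathlib

/-- A directed hypergraph: a vertex type, an arrow type, and origin/end subsets. -/
structure DiHyp where
  V : Type
  E : Type
  orig : E → Set V
  dest : E → Set V

/-- The axioms of Definition 2.1: origins and ends are non-empty and disjoint,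
and the union of origins and ends of all arrows is the whole vertex set. -/
def DiHyp.IsLegal (G : DiHyp) : Prop :=
  (∀ e, (G.orig e).Nonempty) ∧ (∀ e, (G.dest e).Nonempty) ∧
    (∀ e, Disjoint (G.orig e) (G.dest e)) ∧
    (⋃ e, G.orig e ∪ G.dest e) = Set.univ

/-- A pair of maps is a morphism of directed hypergraphs iff
ℙ(f_V) ∘ φ_G = φ_H ∘ f_E. -/
def DiHyp.IsHom (G H : DiHyp) (fV : G.V → H.V) (fE : G.E → H.E) : Prop :=
  ∀ e, H.orig (fE e) = fV '' G.orig e ∧ H.dest (fE e) = fV '' G.dest e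

/-- Bundled morphism of directed hypergraphs. -/
structure DiHyp.Hom (G H : DiHyp) where
  onV : G.V → H.V
  onE : G.E → H.E
  comm : DiHyp.IsHom G H onV onE

/-- The set P₀₁(G) of subsets occurring as origin or end of some arrow. -/
def DiHyp.P01 (G : DiHyp) : Set (Set G.V) := {C | ∃ e, G.orig e = C ∨ G.dest e = C}

/-- The box product of directed hypergraphs. -/
def DiHyp.box (G H : DiHyp) : DiHyp where
  V := G.V × H.V
  E := (G.E × {C : Set H.V // C ∈ H.P01}) ⊕ ({A : Set G.V // A ∈ G.P01} × H.E)
  orig := fun e => match e with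
    | .inl (e, C) => G.orig e ×ˢ C.1
    | .inr (A, e) => A.1 ×ˢ H.orig e
  dest := fun e => match e with
    | .inl (e, C) => G.dest e ×ˢ C.1
    | .inr (A, e) => A.1 ×ˢ H.dest e

/-- The line digraph I₁, as a directed hypergraph: one arrow {b} → {!b}. -/
def lineI1 (b : Bool) : DiHyp where
  V := Bool
  E := Unit
  orig _ := {b}
  dest _ := {!b}

lemma singleton_mem_P01_lineI1 (b i : Bool) : ({i} : Set Bool) ∈ (lineI1 b).P01 :=
  ⟨(), by cases b <;> cases i <;> simp [lineI1]⟩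

/-- The edge A ∪ B of the hypergraph 𝔈(G) corresponding to an arrow A → B of G. -/
def eEdge (G : DiHyp) (e : G.E) : Set G.V := G.orig e ∪ G.dest e

/-- The edge set of the hypergraph 𝔈(G). -/
def eEdges (G : DiHyp) : Set (Set G.V) := {s | ∃ e : G.E, s = eEdge G e}

/-- The path complex ℌ^q of a hypergraph with edge set `Ed`: paths in which every
q consecutive vertices lie in a common edge. -/
def hPaths {V : Type} (Ed : Set (Set V)) (q : ℕ) : Set (List V) :=
  {p | p ≠ [] ∧ ∀ l : List V, l <:+: p → l.length = q → ∃ s ∈ Ed, ∀ x ∈ l, x ∈ s}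

/-- The edge set of the hypergraph I on {0,1}: edges {0}, {1}, {0,1}. -/
def edgeI : Set (Set Bool) := {{false}, {true}, {false, true}}

/-- The edge set of the product 𝔈(G) × I of hypergraphs: all subsets S of e × e'
(e an edge of 𝔈(G), e' an edge of I) projecting onto e and onto e'. -/
def prodEdges {V : Type} (Ed : Set (Set V)) : Set (Set (V × Bool)) :=
  {S | ∃ e ∈ Ed, ∃ e' ∈ edgeI, S ⊆ e ×ˢ e' ∧ Prod.fst '' S = e ∧ Prod.snd '' S = e'}

/-- for every q ≥ 2 there is an inclusion of path complexes
ℌ^q(𝔈(G □ I₁)) ⊆ ℌ^q(𝔈(G) × I), and this inclusion can be strict: for some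
directed hypergraph G the two path complexes differ for q = 2. -/
lemma P01_lineI1 {C : Set Bool} (h : C ∈ (lineI1 false).P01) :
    C = {false} ∨ C = {true} := by
  obtain ⟨_, h | h⟩ := h
  · exact Or.inl h.symm
  · right; rw [← h]; simp [lineI1]

lemma box_edge_sub (G : DiHyp) (hG : G.IsLegal) (s : Set (G.V × Bool))
    (hs : s ∈ eEdges (G.box (lineI1 false))) :
    ∃ S ∈ prodEdges (eEdges G), s ⊆ S := by
  obtain ⟨ho, hd, -, -⟩ := hG
  obtain ⟨e, rfl⟩ := hs
  rcases e with ⟨e, C⟩ | ⟨A, u⟩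
  · -- edge is eEdge G e ×ˢ C
    have hCne : C.1.Nonempty := by
      rcases P01_lineI1 C.2 with h | h <;> rw [h] <;> exact Set.singleton_nonempty _
    have hEne : (eEdge G e).Nonempty := (ho e).mono Set.subset_union_left
    have hCI : C.1 ∈ edgeI := by
      rcases P01_lineI1 C.2 with h | h; exacts [Or.inl h, Or.inr (Or.inl h)]
    refine ⟨eEdge G e ×ˢ C.1, ⟨eEdge G e, ⟨e, rfl⟩, C.1, hCI, subset_rfl,
      Set.fst_image_prod _ hCne, Set.snd_image_prod hEne _⟩, ?_⟩
    intro x hx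
    rcases hx with hx | hx
    · exact ⟨Or.inl hx.1, hx.2⟩
    · exact ⟨Or.inr hx.1, hx.2⟩
  · -- edge is A ×ˢ {false} ∪ A ×ˢ {true}
    obtain ⟨e, hA⟩ := A.2
    have hAsub : A.1 ⊆ eEdge G e := by
      rcases hA with h | h
      · rw [← h]; exact Set.subset_union_left
      · rw [← h]; exact Set.subset_union_right
    have hEne : (eEdge G e).Nonempty := (ho e).mono Set.subset_union_left
    refine ⟨eEdge G e ×ˢ ({false, true} : Set Bool),
      ⟨eEdge G e, ⟨e, rfl⟩, {false, true}, by simp [edgeI], subset_rfl,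
      Set.fst_image_prod _ ⟨false, by simp⟩, Set.snd_image_prod hEne _⟩, ?_⟩
    intro x hx
    rcases hx with hx | hx
    · refine ⟨hAsub hx.1, ?_⟩
      have := hx.2; simp [lineI1] at this; simp [this]
    · refine ⟨hAsub hx.1, ?_⟩
      have := hx.2; simp [lineI1] at this; simp [this]

theorem stmt_18 :
    (∀ G : DiHyp, G.IsLegal → ∀ q : ℕ, 2 ≤ q →
      hPaths (eEdges (G.box (lineI1 false))) q ⊆ hPaths (prodEdges (eEdges G)) q) ∧
    ∃ G : DiHyp, G.IsLegal ∧
      hPaths (eEdges (G.box (lineI1 false))) 2 ≠ hPaths (prodEdges (eEdges G)) 2 := by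
  constructor
  · intro G hG q _ p hp
    obtain ⟨hne, h⟩ := hp
    refine ⟨hne, fun l hl hlen => ?_⟩
    obtain ⟨s, hs, hmem⟩ := h l hl hlen
    obtain ⟨S, hS, hsub⟩ := box_edge_sub G hG s hs
    exact ⟨S, hS, fun x hx => hsub (hmem x hx)⟩
  · refine ⟨lineI1 false, ?_, ?_⟩
    · refine ⟨fun _ => ⟨false, rfl⟩, fun _ => ⟨true, rfl⟩,
        fun _ => ?_, ?_⟩
      · exact Set.disjoint_singleton.mpr Bool.false_ne_true
      · exact Set.eq_univ_of_forall fun x => Set.mem_iUnion.mpr ⟨(), by cases x; exacts [Or.inl rfl, Or.inr rfl]⟩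
    · intro heq
      set p : List (Bool × Bool) := [(false, false), (true, true)] with hp
      have hmem : p ∈ hPaths (prodEdges (eEdges (lineI1 false))) 2 := by
        refine ⟨List.cons_ne_nil _ _, fun l hl hlen => ?_⟩
        have hlp : l = p := hl.sublist.eq_of_length (by rw [hlen, hp]; rfl)
        subst hlp
        refine ⟨({(false, false), (true, true)} : Set (Bool × Bool)),
          ⟨eEdge (lineI1 false) (), ⟨(), rfl⟩, {false, true}, by simp [edgeI],
            ?_, ?_, ?_⟩, ?_⟩
        · intro x hx
          rcases hx with hx | hx <;> subst hx; exacts [⟨Or.inl rfl, Or.inl rfl⟩, ⟨Or.inr rfl, Or.inr rfl⟩]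
        · ext b; cases b; exacts [⟨fun _ => Or.inl rfl, fun _ => ⟨(false, false), Or.inl rfl, rfl⟩⟩, ⟨fun _ => Or.inr rfl, fun _ => ⟨(true, true), Or.inr rfl, rfl⟩⟩]
        · ext b; cases b; exacts [⟨fun _ => Or.inl rfl, fun _ => ⟨(false, false), Or.inl rfl, rfl⟩⟩, ⟨fun _ => Or.inr rfl, fun _ => ⟨(true, true), Or.inr rfl, rfl⟩⟩]
        · intro x hx; rw [hp] at hx
          rcases hx with _ | ⟨_, _ | ⟨_, hx⟩⟩
          exacts [Or.inl rfl, Or.inr rfl, absurd hx List.not_mem_nil]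
      rw [← heq] at hmem
      obtain ⟨-, h⟩ := hmem
      obtain ⟨s, ⟨e, rfl⟩, hm⟩ := h p (List.infix_refl p) (by rfl)
      have h1 : (false, false) ∈ eEdge ((lineI1 false).box (lineI1 false)) e :=
        hm _ List.mem_cons_self
      have h2 : (true, true) ∈ eEdge ((lineI1 false).box (lineI1 false)) e :=
        hm _ (List.mem_cons_of_mem _ List.mem_cons_self)
      rcases e with ⟨e, C⟩ | ⟨A, u⟩
      · have hf : false ∈ C.1 := by
          rcases h1 with h | h
          · exact h.2
          · exact h.2
        have ht : true ∈ C.1 := by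
          rcases h2 with h | h
          · exact h.2
          · exact h.2
        rcases P01_lineI1 C.2 with h | h <;> rw [h] at hf ht <;> exact Bool.false_ne_true (hf.trans ht.symm)
      · have hf : false ∈ A.1 := by
          rcases h1 with h | h
          · exact h.1
          · exact h.1
        have ht : true ∈ A.1 := by
          rcases h2 with h | h
          · exact h.1
          · exact h.1
        rcases P01_lineI1 A.2 with h | h <;> rw [h] at hf ht <;> exact Bool.false_ne_true (hf.trans ht.symm)
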